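/- Assume the half-grid hypotheses for a 16-point set Z = Z_a ∪ Z_b ∪ Z_c ∪ Z_d on four pairwise skew lines R_a, R_b, R_c, R_d in ℙ³. Then Z is not a (4,4)-grid: there do not exist four pairwise skew lines m₁, m₂, m₃, m₄ such that each mᵢ meets each of R_a, R_b, R_c, R_d in a point of Z and the 16 intersection points mᵢ ∩ R_x are exactly the points of Z. -/

import Mathlib

open Projectivization
open scoped LinearAlgebra.Projectivization

/-- The half-grid hypotheses for a 16-point set `Z = Z 0 ∪ Z 1 ∪ Z 2 ∪ Z 3` distributed
evenly on four pairwise skew lines `R 0, …, R 3` in `ℙ³` (lines are given by their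
2-dimensional subspaces of `ℂ⁴`):
* each `Z x` consists of 4 distinct points of the line `ℙ(R x)`;
* no nonzero homogeneous quadratic form on `ℂ⁴` vanishes at all points of `Z`;
* for each `x`, the 12 points `Z ∖ Z x` form a (3,4)-grid with respect to the remaining
  three lines: there are four pairwise skew lines `ℓ 0, …, ℓ 3`, each meeting each line
  `ℙ(R y)` (`y ≠ x`) in exactly one point, the 12 intersection points being exactly
  `Z ∖ Z x`. -/
structure HalfGridHyp (R : Fin 4 → Submodule ℂ (Fin 4 → ℂ))
    (Z : Fin 4 → Set (ℙ ℂ (Fin 4 → ℂ))) : Prop where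
  finrank_eq : ∀ x, Module.finrank ℂ (R x) = 2
  skew : ∀ x y, x ≠ y → R x ⊓ R y = ⊥
  ncard_eq : ∀ x, (Z x).ncard = 4
  mem_line : ∀ x, ∀ p ∈ Z x, p.submodule ≤ R x
  no_quadric : ¬ ∃ q : QuadraticForm ℂ (Fin 4 → ℂ), q ≠ 0 ∧
    ∀ x, ∀ p ∈ Z x, ∀ v ∈ Projectivization.submodule p, q v = 0
  grid : ∀ x : Fin 4, ∃ ℓ : Fin 4 → Submodule ℂ (Fin 4 → ℂ),
    (∀ i, Module.finrank ℂ (ℓ i) = 2) ∧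
    (∀ i j, i ≠ j → ℓ i ⊓ ℓ j = ⊥) ∧
    (∀ i, ∀ y, y ≠ x → ∃! p : ℙ ℂ (Fin 4 → ℂ),
      p.submodule ≤ ℓ i ∧ p.submodule ≤ R y) ∧
    {p : ℙ ℂ (Fin 4 → ℂ) | ∃ i y, y ≠ x ∧ p.submodule ≤ ℓ i ∧ p.submodule ≤ R y}
      = (⋃ y, Z y) \ Z x

/-- A nonzero quadric through three pairwise skew lines in `ℙ³`. -/
lemma exists_quadric (W₀ W₁ W₂ : Submodule ℂ (Fin 4 → ℂ))
    (h0 : Module.finrank ℂ W₀ = 2) (h1 : Module.finrank ℂ W₁ = 2)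
    (h2 : Module.finrank ℂ W₂ = 2)
    (h01 : W₀ ⊓ W₁ = ⊥) (h20 : W₂ ⊓ W₀ = ⊥) (h21 : W₂ ⊓ W₁ = ⊥) :
    ∃ q : QuadraticForm ℂ (Fin 4 → ℂ), q ≠ 0 ∧
      (∀ v ∈ W₀, q v = 0) ∧ (∀ v ∈ W₁, q v = 0) ∧ (∀ v ∈ W₂, q v = 0) := by
  have hV : Module.finrank ℂ (Fin 4 → ℂ) = 4 := Module.finrank_fin_fun ℂ
  have hcompl : IsCompl W₀ W₁ := by
    constructor
    · exact disjoint_iff.mpr h01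
    · rw [codisjoint_iff]
      apply Submodule.eq_top_of_finrank_eq
      have h := Submodule.finrank_sup_add_finrank_inf_eq W₀ W₁
      rw [h01, finrank_bot] at h
      rw [hV]
      omega
  set π₀ := W₀.linearProjOfIsCompl W₁ hcompl with hπ₀
  set π₁ := W₁.linearProjOfIsCompl W₀ hcompl.symm with hπ₁
  have key : ∀ (W : Submodule ℂ (Fin 4 → ℂ)) (π : (Fin 4 → ℂ) →ₗ[ℂ] W)
      (hW : Module.finrank ℂ W = 2)
      (hker : ∀ v : Fin 4 → ℂ, v ∈ W₂ → π v = 0 → v = 0),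
      Function.Bijective (π ∘ₗ W₂.subtype) := by
    intro W π hW hker
    have hinj : Function.Injective (π ∘ₗ W₂.subtype) := by
      rw [← LinearMap.ker_eq_bot, Submodule.eq_bot_iff]
      rintro ⟨v, hv⟩ hv0
      simp only [LinearMap.mem_ker, LinearMap.comp_apply, Submodule.subtype_apply] at hv0
      exact Subtype.ext (hker v hv hv0)
    exact ⟨hinj, (LinearMap.injective_iff_surjective_of_finrank_eq_finrank
      (by rw [h2, hW])).mp hinj⟩
  have b0 : Function.Bijective (π₀ ∘ₗ W₂.subtype) := by
    refine key W₀ π₀ h0 fun v hv hv0 ↦ ?_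
    have hm : v ∈ W₁ := (Submodule.linearProjOfIsCompl_apply_eq_zero_iff hcompl).mp hv0
    have : v ∈ W₂ ⊓ W₁ := ⟨hv, hm⟩
    simpa [h21] using this
  have b1 : Function.Bijective (π₁ ∘ₗ W₂.subtype) := by
    refine key W₁ π₁ h1 fun v hv hv0 ↦ ?_
    have hm : v ∈ W₀ := (Submodule.linearProjOfIsCompl_apply_eq_zero_iff hcompl.symm).mp hv0
    have : v ∈ W₂ ⊓ W₀ := ⟨hv, hm⟩
    simpa [h20] using this
  set e₀ := LinearEquiv.ofBijective _ b0 with he₀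
  set e₁ := LinearEquiv.ofBijective _ b1 with he₁
  set b : Module.Basis (Fin 2) ℂ W₂ := Module.finBasisOfFinrankEq ℂ W₂ h2 with hb
  set ω : W₂ →ₗ[ℂ] W₂ →ₗ[ℂ] ℂ :=
    (b.coord 0).smulRight (b.coord 1) - (b.coord 1).smulRight (b.coord 0) with hω
  have hωself : ∀ u : W₂, ω u u = 0 := by
    intro u
    simp only [hω, LinearMap.sub_apply, LinearMap.smulRight_apply, LinearMap.smul_apply,
      smul_eq_mul]
    ring
  set L₀ : (Fin 4 → ℂ) →ₗ[ℂ] W₂ := e₀.symm.toLinearMap ∘ₗ π₀ with hL₀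
  set L₁ : (Fin 4 → ℂ) →ₗ[ℂ] W₂ := e₁.symm.toLinearMap ∘ₗ π₁ with hL₁
  set C : LinearMap.BilinMap ℂ (Fin 4 → ℂ) ℂ := (ω ∘ₗ L₀).compl₂ L₁ with hC
  have hCval : ∀ v : Fin 4 → ℂ, C.toQuadraticMap v = ω (L₀ v) (L₁ v) := fun _ ↦ rfl
  have hW2L : ∀ (v) (hv : v ∈ W₂), L₀ v = ⟨v, hv⟩ ∧ L₁ v = ⟨v, hv⟩ := by
    intro v hv
    constructor
    · show e₀.symm (π₀ v) = _
      rw [show π₀ v = e₀ ⟨v, hv⟩ from rfl, e₀.symm_apply_apply]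
    · show e₁.symm (π₁ v) = _
      rw [show π₁ v = e₁ ⟨v, hv⟩ from rfl, e₁.symm_apply_apply]
  refine ⟨C.toQuadraticMap, ?_, ?_, ?_, ?_⟩
  · intro hq0
    set v : Fin 4 → ℂ := ↑(e₀ (b 0)) + ↑(e₁ (b 1)) with hv
    have hm0 : (e₀ (b 0) : Fin 4 → ℂ) ∈ W₀ := (e₀ (b 0)).2
    have hm1 : (e₁ (b 1) : Fin 4 → ℂ) ∈ W₁ := (e₁ (b 1)).2
    have hπ0v : π₀ v = e₀ (b 0) := by
      rw [hv, map_add, show π₀ ↑(e₁ (b 1)) = 0 from Submodule.linearProjOfIsCompl_apply_right' hcompl hm1,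
        add_zero]
      exact Submodule.linearProjOfIsCompl_apply_left hcompl (e₀ (b 0))
    have hπ1v : π₁ v = e₁ (b 1) := by
      rw [hv, map_add, show π₁ ↑(e₀ (b 0)) = 0 from Submodule.linearProjOfIsCompl_apply_right' hcompl.symm hm0,
        zero_add]
      exact Submodule.linearProjOfIsCompl_apply_left hcompl.symm (e₁ (b 1))
    have hqv : C.toQuadraticMap v = ω (b 0) (b 1) := by
      rw [hCval, hL₀, hL₁]
      simp only [LinearMap.coe_comp, Function.comp_apply, LinearEquiv.coe_coe,
        hπ0v, hπ1v, e₀.symm_apply_apply, e₁.symm_apply_apply]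
    have hone : ω (b 0) (b 1) = 1 := by
      simp only [hω, LinearMap.sub_apply, LinearMap.smulRight_apply, LinearMap.smul_apply,
        smul_eq_mul, Module.Basis.coord_apply, Module.Basis.repr_self, Finsupp.single_apply]
      norm_num
    have : (1 : ℂ) = 0 := by rw [← hone, ← hqv, hq0]; simp
    exact one_ne_zero this
  · intro v hv
    have h : π₁ v = 0 := Submodule.linearProjOfIsCompl_apply_right' hcompl.symm hv
    have hL : L₁ v = 0 := by
      show e₁.symm.toLinearMap (π₁ v) = 0
      rw [h]
      exact e₁.symm.toLinearMap.map_zero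
    rw [hCval, hL]
    exact (ω (L₀ v)).map_zero
  · intro v hv
    have h : π₀ v = 0 := Submodule.linearProjOfIsCompl_apply_right' hcompl hv
    have hL : L₀ v = 0 := by
      show e₀.symm.toLinearMap (π₀ v) = 0
      rw [h]
      exact e₀.symm.toLinearMap.map_zero
    rw [hCval, hL, ω.map_zero]
    exact LinearMap.zero_apply _
  · intro v hv
    obtain ⟨hl0, hl1⟩ := hW2L v hv
    rw [hCval, hl0, hl1]
    exact hωself _

/-- Under the half-grid hypotheses for a 16-point set
`Z = Z 0 ∪ Z 1 ∪ Z 2 ∪ Z 3` on four pairwise skew lines `R 0, …, R 3`, the set `Z` is not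
a (4,4)-grid: there are no four pairwise skew lines `m 0, …, m 3` such that each `m i`
meets each `R x` in a point of `Z` and the 16 intersection points `m i ∩ R x` are exactly
the points of `Z`. -/
theorem halfGrid_not_a_grid
    (R : Fin 4 → Submodule ℂ (Fin 4 → ℂ)) (Z : Fin 4 → Set (ℙ ℂ (Fin 4 → ℂ)))
    (hyp : HalfGridHyp R Z) :
    ¬ ∃ m : Fin 4 → Submodule ℂ (Fin 4 → ℂ),
        (∀ i, Module.finrank ℂ (m i) = 2) ∧
        (∀ i j, i ≠ j → m i ⊓ m j = ⊥) ∧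
        (∀ i x, ∃ p : ℙ ℂ (Fin 4 → ℂ), p ∈ (⋃ y, Z y) ∧
          Projectivization.submodule p ≤ m i ∧ Projectivization.submodule p ≤ R x) ∧
        {p : ℙ ℂ (Fin 4 → ℂ) | ∃ i x,
            Projectivization.submodule p ≤ m i ∧ Projectivization.submodule p ≤ R x}
          = ⋃ y, Z y := by
  rintro ⟨m, hrank, -, hmeet, hset⟩
  obtain ⟨q, hq0, hQ0, hQ1, hQ2⟩ := exists_quadric (R 0) (R 1) (R 2)
    (hyp.finrank_eq 0) (hyp.finrank_eq 1) (hyp.finrank_eq 2)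
    (hyp.skew 0 1 (by decide)) (hyp.skew 2 0 (by decide)) (hyp.skew 2 1 (by decide))
  have rep_mem : ∀ p : ℙ ℂ (Fin 4 → ℂ), p.rep ∈ p.submodule := fun p => by
    rw [Projectivization.submodule_eq]
    exact Submodule.mem_span_singleton_self _
  have hskewR : ∀ x y : Fin 4, x ≠ y → ∀ v : Fin 4 → ℂ,
      v ∈ R x → v ∈ R y → v = 0 := by
    intro x y hxy v hx hy
    have hmem : v ∈ R x ⊓ R y := ⟨hx, hy⟩
    rw [hyp.skew x y hxy] at hmem
    simpa using hmem
  -- the quadric vanishes on every line `m i`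
  have hm : ∀ i : Fin 4, ∀ w ∈ m i, q w = 0 := by
    intro i
    obtain ⟨p0, -, hp0m, hp0R⟩ := hmeet i 0
    obtain ⟨p1, -, hp1m, hp1R⟩ := hmeet i 1
    obtain ⟨p2, -, hp2m, hp2R⟩ := hmeet i 2
    set v0 := p0.rep with hv0
    set v1 := p1.rep with hv1
    set v2 := p2.rep with hv2
    have hv0m : v0 ∈ m i := hp0m (rep_mem p0)
    have hv1m : v1 ∈ m i := hp1m (rep_mem p1)
    have hv2m : v2 ∈ m i := hp2m (rep_mem p2)
    have hv0R : v0 ∈ R 0 := hp0R (rep_mem p0)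
    have hv1R : v1 ∈ R 1 := hp1R (rep_mem p1)
    have hv2R : v2 ∈ R 2 := hp2R (rep_mem p2)
    have hq00 : q v0 = 0 := hQ0 v0 hv0R
    have hq11 : q v1 = 0 := hQ1 v1 hv1R
    have hq22 : q v2 = 0 := hQ2 v2 hv2R
    have hind : LinearIndependent ℂ ![v0, v1] := by
      rw [LinearIndependent.pair_iff]
      intro s t hst
      have h1 : s • v0 ∈ R 0 := (R 0).smul_mem s hv0R
      have h2 : s • v0 ∈ R 1 := by
        have he : s • v0 = -(t • v1) := eq_neg_of_add_eq_zero_left hst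
        rw [he]
        exact (R 1).neg_mem ((R 1).smul_mem t hv1R)
      have h0 : s • v0 = 0 := hskewR 0 1 (by decide) _ h1 h2
      have hs : s = 0 := by
        rcases smul_eq_zero.mp h0 with h | h
        · exact h
        · exact absurd h p0.rep_nonzero
      refine ⟨hs, ?_⟩
      rw [hs, zero_smul, zero_add] at hst
      rcases smul_eq_zero.mp hst with h | h
      · exact h
      · exact absurd h p1.rep_nonzero
    have hspan : Submodule.span ℂ {v0, v1} = m i := by
      have hle : Submodule.span ℂ {v0, v1} ≤ m i := by
        rw [Submodule.span_le]
        rintro w (rfl | rfl)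
        · exact hv0m
        · exact hv1m
      have hfr : Module.finrank ℂ (Submodule.span ℂ {v0, v1}) = 2 := by
        have h := finrank_span_eq_card hind
        rwa [show Set.range ![v0, v1] = {v0, v1} by
          simp [Matrix.range_cons, Matrix.range_empty, Set.pair_comm], Fintype.card_fin] at h
      exact Submodule.eq_of_le_of_finrank_eq hle (by rw [hfr, hrank i])
    obtain ⟨a, b, hab⟩ := Submodule.mem_span_pair.mp (hspan ▸ hv2m)
    have ha : a ≠ 0 := by
      rintro rfl
      rw [zero_smul, zero_add] at hab
      have : v2 = 0 := hskewR 2 1 (by decide) v2 hv2R (hab ▸ (R 1).smul_mem b hv1R)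
      exact p2.rep_nonzero this
    have hb : b ≠ 0 := by
      rintro rfl
      rw [zero_smul, add_zero] at hab
      have : v2 = 0 := hskewR 2 0 (by decide) v2 hv2R (hab ▸ (R 0).smul_mem a hv0R)
      exact p2.rep_nonzero this
    have expand : ∀ c d : ℂ, q (c • v0 + d • v1)
        = c * c * q v0 + d * d * q v1 + (c * d) * QuadraticMap.polar q v0 v1 := by
      intro c d
      have hpol : QuadraticMap.polar q (c • v0) (d • v1)
          = q (c • v0 + d • v1) - q (c • v0) - q (d • v1) := rfl
      have h1 : QuadraticMap.polar q (c • v0) (d • v1)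
          = (c * d) * QuadraticMap.polar q v0 v1 := by
        rw [QuadraticMap.polar_smul_left, QuadraticMap.polar_smul_right,
          smul_eq_mul, smul_eq_mul]
        ring
      have h2 : q (c • v0) = c * c * q v0 := by
        rw [QuadraticMap.map_smul, smul_eq_mul]
      have h3 : q (d • v1) = d * d * q v1 := by
        rw [QuadraticMap.map_smul, smul_eq_mul]
      rw [h1, h2, h3] at hpol
      linear_combination -hpol
    have hpolar : QuadraticMap.polar q v0 v1 = 0 := by
      have h := expand a b
      rw [hab, hq22, hq00, hq11] at h
      have hz : (a * b) * QuadraticMap.polar q v0 v1 = 0 := by linear_combination -h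
      rcases mul_eq_zero.mp hz with h' | h'
      · exact absurd h' (mul_ne_zero ha hb)
      · exact h'
    intro w hw
    obtain ⟨c, d, hcd⟩ := Submodule.mem_span_pair.mp (hspan ▸ hw)
    rw [← hcd, expand c d, hq00, hq11, hpolar]
    ring
  -- conclude: the quadric vanishes on all of Z
  apply hyp.no_quadric
  refine ⟨q, hq0, ?_⟩
  intro x p hp v hv
  have hpZ : p ∈ ⋃ y, Z y := Set.mem_iUnion.mpr ⟨x, hp⟩
  rw [← hset] at hpZ
  obtain ⟨i, x', hpm, -⟩ := hpZ
  exact hm i v (hpm hv)
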